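/- For any two timing functions γ and σ of length n, the stable, co-operative, reverse chronological sequence of mixed moves aligning γ to σ has minimal cost among all sequences of stamp and delay moves aligning γ to σ; that is, its cost equals d_N(γ, σ). -/

import Mathlib

open Finset

namespace TimedAlign

variable {n : ℕ}

/-- The stamp move `stamp(γ, x, i)`: shift the timestamp at position `i` by `x`. -/
def stamp (γ : Fin n → ℝ) (x : ℝ) (i : Fin n) : Fin n → ℝ :=
  fun j => if j = i then γ j + x else γ j

/-- The delay move `delay(γ, x, i)`: shift all timestamps at positions `≥ i` by `x`. -/
def delay (γ : Fin n → ℝ) (x : ℝ) (i : Fin n) : Fin n → ℝ :=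
  fun j => if i ≤ j then γ j + x else γ j

/-- The mixed move `(s, d, i)`: a delay move followed by a stamp move at the same position. -/
def mixed (s d : ℝ) (i : Fin n) (γ : Fin n → ℝ) : Fin n → ℝ :=
  stamp (delay γ d i) s i

/-- The timestamp preceding position `i` (with the convention `τ(0) = 0`). -/
def prev (τ : Fin n → ℝ) (i : Fin n) : ℝ :=
  if (i : ℕ) = 0 then 0
  else τ ⟨(i : ℕ) - 1, lt_of_le_of_lt (Nat.sub_le _ _) i.isLt⟩

/-- The flow function of a timing function: `f_τ(1) = τ(1)`, `f_τ(i) = τ(i) - τ(i-1)`. -/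
def flow (τ : Fin n → ℝ) (i : Fin n) : ℝ := τ i - prev τ i

/-- Elementary moves: stamp moves and delay moves. -/
inductive Move (n : ℕ) where
  | stampM (x : ℝ) (i : Fin n)
  | delayM (x : ℝ) (i : Fin n)

def Move.apply : Move n → (Fin n → ℝ) → (Fin n → ℝ)
  | .stampM x i, γ => stamp γ x i
  | .delayM x i, γ => delay γ x i

def Move.cost : Move n → ℝ
  | .stampM x _ => |x|
  | .delayM x _ => |x|

/-- Apply a sequence of moves `m₁ m₂ ⋯ m_k`, with `m₁` first. -/
def applySeq (ms : List (Move n)) (γ : Fin n → ℝ) : Fin n → ℝ :=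
  ms.foldl (fun τ m => m.apply τ) γ

/-- The cost of a sequence of moves is the sum of the costs of its moves. -/
def seqCost (ms : List (Move n)) : ℝ := (ms.map Move.cost).sum

/-- The mixed-moves distance `d_N`: the minimum cost over all finite sequences of
stamp and delay moves aligning `τ₁` to `τ₂`. -/
noncomputable def dN (τ₁ τ₂ : Fin n → ℝ) : ℝ :=
  sInf {c : ℝ | ∃ ms : List (Move n), applySeq ms τ₁ = τ₂ ∧ seqCost ms = c}

/-- Apply the chronological sequence of mixed moves `(s₁,d₁,1)(s₂,d₂,2)⋯(s_n,d_n,n)`,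
in increasing order of positions. -/
def chronApply (s d : Fin n → ℝ) (γ : Fin n → ℝ) : Fin n → ℝ :=
  (List.finRange n).foldl (fun τ i => mixed (s i) (d i) i τ) γ

/-- Apply the reverse chronological sequence `(s_n,d_n,n)⋯(s₁,d₁,1)`,
in decreasing order of positions. -/
def revChronApply (s d : Fin n → ℝ) (γ : Fin n → ℝ) : Fin n → ℝ :=
  (List.finRange n).reverse.foldl (fun τ i => mixed (s i) (d i) i τ) γ

/-- The cost of a (reverse) chronological sequence of mixed moves. -/
def chronCost (s d : Fin n → ℝ) : ℝ := ∑ i, (|s i| + |d i|)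

/-- A sequence of mixed moves is co-operative if each move has `s·d ≥ 0`. -/
def Cooperative (s d : Fin n → ℝ) : Prop := ∀ i, 0 ≤ s i * d i

/-- The move at the last position is a pure delay (`s_n = 0`). -/
def LastStampZero (s : Fin n → ℝ) : Prop := ∀ i : Fin n, (i : ℕ) + 1 = n → s i = 0

/-- Cross co-operation: `s_i · d_{i+1} ≤ 0` for all `i < n`. -/
def CrossCooperative (s d : Fin n → ℝ) : Prop :=
  ∀ i : Fin n, ∀ h : (i : ℕ) + 1 < n, s i * d ⟨(i : ℕ) + 1, h⟩ ≤ 0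

/-- The stable choice of stamp given error `e` at the current position and
residual `r` at the next position. -/
noncomputable def stableStamp (e r : ℝ) : ℝ :=
  if 0 ≤ e * r then 0 else if |e| < |r| then e else -r

/-- Stability of the stamp components of a reverse chronological co-operative run
aligning `γ` to `σ`: writing `e_i = f_σ(i) - f_γ(i)` and `r_{i+1} = e_{i+1} - s_{i+1}`,
`s_i = 0` if `e_i·r_{i+1} ≥ 0`, `s_i = e_i` if moreover `|e_i| < |r_{i+1}|`,
and `s_i = -r_{i+1}` otherwise. -/
def Stable (γ σ s : Fin n → ℝ) : Prop :=
  ∀ i : Fin n, ∀ h : (i : ℕ) + 1 < n,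
    s i = stableStamp (flow σ i - flow γ i)
      ((flow σ ⟨(i : ℕ) + 1, h⟩ - flow γ ⟨(i : ℕ) + 1, h⟩) - s ⟨(i : ℕ) + 1, h⟩)

/-- `s_{i-1}`, with the convention `s₀ = 0`. -/
def sprev (s : Fin n → ℝ) (i : Fin n) : ℝ :=
  if (i : ℕ) = 0 then 0
  else s ⟨(i : ℕ) - 1, lt_of_le_of_lt (Nat.sub_le _ _) i.isLt⟩

section Aux

noncomputable def resid (e r : ℝ) : ℝ := e - stableStamp e r

lemma stableStamp_mul_nonpos (e r : ℝ) : stableStamp e r * r ≤ 0 := by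
  unfold stableStamp
  split_ifs with h1 h2
  · simp
  · nlinarith
  · nlinarith [sq_nonneg r]

lemma abs_stableStamp_le (e r : ℝ) : |stableStamp e r| ≤ |r| := by
  unfold stableStamp
  split_ifs with h1 h2
  · simp
  · exact le_of_lt h2
  · simp

lemma resid_nonneg_form (e r : ℝ) (hr : 0 ≤ r) :
    resid e r = if 0 ≤ e then e else if -r ≤ e then 0 else e + r := by
  unfold resid stableStamp
  rcases eq_or_lt_of_le hr with rfl | hr
  · rw [if_pos (by simp : (0:ℝ) ≤ e * 0)]
    split_ifs <;> first | ring1 | linarith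
  · rcases lt_trichotomy e 0 with he | rfl | he
    · rw [if_neg (by nlinarith : ¬ (0:ℝ) ≤ e * r), abs_of_neg he, abs_of_pos hr]
      by_cases h2 : -e < r
      · rw [if_pos h2, if_neg (not_le.2 he), if_pos (by linarith)]; ring
      · rw [if_neg h2, if_neg (not_le.2 he)]
        split_ifs with h3
        · have : e = -r := by linarith
          rw [this]; ring
        · ring
    · rw [if_pos (by simp : (0:ℝ) ≤ 0 * r), if_pos le_rfl]; ring
    · rw [if_pos (le_of_lt (mul_pos he hr)), if_pos he.le]; ring

lemma resid_neg (e r : ℝ) : resid (-e) (-r) = -resid e r := by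
  unfold resid stableStamp
  simp only [abs_neg, neg_mul_neg]
  split_ifs <;> ring

lemma resid_zero (e : ℝ) : resid e 0 = e := by
  rw [resid_nonneg_form e 0 le_rfl]; split_ifs <;> linarith

lemma resid_nonpos_form (e r : ℝ) (hr : r ≤ 0) :
    resid e r = if e ≤ 0 then e else if e ≤ -r then 0 else e + r := by
  have h := resid_neg (-e) (-r)
  simp only [neg_neg] at h
  rw [h, resid_nonneg_form (-e) (-r) (by linarith)]
  split_ifs <;> first | ring1 | linarith

set_option maxHeartbeats 2000000 in
lemma resid_lipschitz_nonneg (a b q : ℝ) (hq : 0 ≤ q) :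
    |resid a q| ≤ |a - b| + |resid b q| := by
  rw [resid_nonneg_form a q hq, resid_nonneg_form b q hq]
  split_ifs <;>
  · rcases abs_cases a with ⟨h1, h1'⟩ | ⟨h1, h1'⟩ <;>
    rcases abs_cases b with ⟨h2, h2'⟩ | ⟨h2, h2'⟩ <;>
    rcases abs_cases (a - b) with ⟨h3, h3'⟩ | ⟨h3, h3'⟩ <;>
    rcases abs_cases (a + q) with ⟨h4, h4'⟩ | ⟨h4, h4'⟩ <;>
    rcases abs_cases (b + q) with ⟨h5, h5'⟩ | ⟨h5, h5'⟩ <;>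
    linarith [(abs_zero : |(0:ℝ)| = 0)]

lemma resid_lipschitz (a b q : ℝ) : |resid a q| ≤ |a - b| + |resid b q| := by
  rcases le_total 0 q with hq | hq
  · exact resid_lipschitz_nonneg a b q hq
  · have ha := resid_neg a q
    have hb := resid_neg b q
    have := resid_lipschitz_nonneg (-a) (-b) (-q) (by linarith)
    rw [ha, hb, abs_neg, abs_neg] at this
    calc |resid a q| ≤ |-a - -b| + |resid b q| := this
    _ = |a - b| + |resid b q| := by rw [show -a - -b = -(a-b) by ring, abs_neg]

set_option maxHeartbeats 4000000 in
lemma resid_dagger_nonneg (e r b : ℝ) (hr : 0 ≤ r) :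
    |resid b (resid e r)| + |resid e r| ≤ |b| + |resid (e + b) r| := by
  rw [resid_nonneg_form (e+b) r hr, resid_nonneg_form e r hr]
  by_cases h1 : 0 ≤ e
  · rw [if_pos h1, resid_nonneg_form b e h1]
    split_ifs <;>
    · rcases abs_cases b with ⟨g1, g1'⟩ | ⟨g1, g1'⟩ <;>
      rcases abs_cases e with ⟨g2, g2'⟩ | ⟨g2, g2'⟩ <;>
      rcases abs_cases (b + e) with ⟨g3, g3'⟩ | ⟨g3, g3'⟩ <;>
      rcases abs_cases (e + b) with ⟨g4, g4'⟩ | ⟨g4, g4'⟩ <;>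
      rcases abs_cases (e + b + r) with ⟨g5, g5'⟩ | ⟨g5, g5'⟩ <;>
      linarith [(abs_zero : |(0:ℝ)| = 0)]
  · rw [if_neg h1]
    by_cases h2 : -r ≤ e
    · rw [if_pos h2, resid_zero]
      split_ifs <;>
        first
        | linarith [abs_nonneg (e+b), abs_nonneg (e+b+r), abs_nonneg b]
        | simp [abs_nonneg]
    · rw [if_neg h2, resid_nonpos_form b (e + r) (by linarith)]
      split_ifs <;>
      · rcases abs_cases b with ⟨g1, g1'⟩ | ⟨g1, g1'⟩ <;>
        rcases abs_cases (e + r) with ⟨g2, g2'⟩ | ⟨g2, g2'⟩ <;>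
        rcases abs_cases (b + (e + r)) with ⟨g3, g3'⟩ | ⟨g3, g3'⟩ <;>
        rcases abs_cases (e + b) with ⟨g4, g4'⟩ | ⟨g4, g4'⟩ <;>
        rcases abs_cases (e + b + r) with ⟨g5, g5'⟩ | ⟨g5, g5'⟩ <;>
        linarith [(abs_zero : |(0:ℝ)| = 0)]

lemma resid_dagger (e r b : ℝ) :
    |resid b (resid e r)| + |resid e r| ≤ |b| + |resid (e + b) r| := by
  rcases le_total 0 r with hr | hr
  · exact resid_dagger_nonneg e r b hr
  · have he := resid_neg e r
    have heb := resid_neg (e + b) r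
    have := resid_dagger_nonneg (-e) (-r) (-b) (by linarith)
    rw [he, resid_neg b (resid e r), show -e + -b = -(e+b) by ring, heb] at this
    simp only [abs_neg] at this
    exact this

lemma resid_zero_left (q : ℝ) : resid 0 q = 0 := by
  unfold resid stableStamp
  rw [if_pos (by simp)]; ring

lemma star (a e r b : ℝ) :
    |resid a (resid e r)| + |resid e r| ≤ |a - b| + |b| + |resid (e + b) r| := by
  have h1 := resid_lipschitz a b (resid e r)
  have h2 := resid_dagger e r b
  linarith

noncomputable def rlist : List ℝ → ℝ
  | [] => 0
  | e :: es => resid e (rlist es)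

noncomputable def Rcost : List ℝ → ℝ
  | [] => 0
  | e :: es => |resid e (rlist es)| + Rcost es

noncomputable def lcost : ℝ → List ℝ → List ℝ → ℝ
  | _, [], _ => 0
  | p, e :: es, [] => |e + p| + lcost 0 es []
  | p, e :: es, b :: bs => |b| + |e + p - b| + lcost b es bs

noncomputable def Roff (p : ℝ) : List ℝ → ℝ
  | [] => 0
  | e :: es => |resid (e + p) (rlist es)| + Rcost es

lemma Roff_zero (es : List ℝ) : Roff 0 es = Rcost es := by
  cases es with
  | nil => rfl
  | cons e es => simp [Roff, Rcost]

lemma lb_aux (e p b : ℝ) (es : List ℝ) :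
    |resid (e + p) (rlist es)| + Rcost es ≤ |e + p - b| + |b| + Roff b es := by
  cases es with
  | nil =>
    simp only [rlist, Rcost, Roff]
    have h := resid_lipschitz (e + p) b 0
    rw [resid_zero] at h ⊢
    rw [resid_zero] at h
    linarith
  | cons e2 es2 =>
    simp only [rlist, Rcost, Roff]
    have := star (e + p) e2 (rlist es2) b
    linarith

lemma lower_bound : ∀ (es bs : List ℝ) (p : ℝ), Roff p es ≤ lcost p es bs := by
  intro es
  induction es with
  | nil => intro bs p; cases bs <;> simp [Roff, lcost]
  | cons e es ih =>
    intro bs p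
    cases bs with
    | nil =>
      have h := lb_aux e p 0 es
      have h2 := ih [] 0
      simp only [sub_zero, abs_zero, add_zero] at h
      simp only [Roff, lcost]
      cases es with
      | nil => simp only [Roff] at h ⊢; simp only [lcost]; linarith
      | cons e2 es2 => simp only [Roff] at h h2 ⊢; simp only [lcost] at h2 ⊢; linarith
    | cons b bs =>
      have h := lb_aux e p b es
      have h2 := ih bs b
      simp only [Roff, lcost] at *
      linarith

noncomputable def sB : List ℝ → List ℝ
  | [] => []
  | e :: es => stableStamp e (rlist es) :: sB es

lemma abs_add_opp (p q : ℝ) (h1 : p * q ≤ 0) (h2 : |p| ≤ |q|) : |q + p| = |q| - |p| := by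
  rcases abs_cases p with ⟨g1, g1'⟩ | ⟨g1, g1'⟩ <;>
  rcases abs_cases q with ⟨g2, g2'⟩ | ⟨g2, g2'⟩ <;>
  rcases abs_cases (q + p) with ⟨g3, g3'⟩ | ⟨g3, g3'⟩ <;>
  nlinarith

lemma cost_stable : ∀ (es : List ℝ) (p : ℝ), p * rlist es ≤ 0 → |p| ≤ |rlist es| →
    lcost p es (sB es) = Rcost es - |p| := by
  intro es
  induction es with
  | nil =>
    intro p h1 h2
    simp only [rlist, abs_zero] at h2
    have : |p| = 0 := le_antisymm h2 (abs_nonneg p)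
    simp [lcost, Rcost, this]
  | cons e es ih =>
    intro p h1 h2
    simp only [rlist] at h1 h2
    simp only [sB, lcost, Rcost]
    have hmul : stableStamp e (rlist es) * rlist es ≤ 0 := stableStamp_mul_nonpos _ _
    have habs : |stableStamp e (rlist es)| ≤ |rlist es| := abs_stableStamp_le _ _
    rw [ih (stableStamp e (rlist es)) hmul habs]
    have key : |e + p - stableStamp e (rlist es)| = |resid e (rlist es)| - |p| := by
      have : e + p - stableStamp e (rlist es) = resid e (rlist es) + p := by
        unfold resid; ring
      rw [this]
      exact abs_add_opp p (resid e (rlist es)) h1 h2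
    rw [key]; ring

lemma cost_stable_zero (es : List ℝ) : lcost 0 es (sB es) = Rcost es := by
  have := cost_stable es 0 (by simp) (by simp)
  simpa using this

lemma list_main (es bs : List ℝ) : lcost 0 es (sB es) ≤ lcost 0 es bs := by
  rw [cost_stable_zero, ← Roff_zero]; exact lower_bound es bs 0


noncomputable def pprev (p : ℝ) (g : Fin n → ℝ) (i : Fin n) : ℝ :=
  if (i : ℕ) = 0 then p
  else g ⟨(i : ℕ) - 1, lt_of_le_of_lt (Nat.sub_le _ _) i.isLt⟩

lemma pprev_zero (g : Fin n → ℝ) (i : Fin n) : pprev 0 g i = sprev g i := rfl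

lemma pprev_succ_zero {m : ℕ} (p : ℝ) (g : Fin (m+1) → ℝ) : pprev p g 0 = p := rfl

lemma pprev_succ {m : ℕ} (p : ℝ) (g : Fin (m+1) → ℝ) (i : Fin m) :
    pprev p g i.succ = pprev (g 0) (fun k => g k.succ) i := by
  unfold pprev
  by_cases h : (i : ℕ) = 0
  · rw [if_neg (by simp [Fin.val_succ]), if_pos h]
    congr 1
    ext
    simp [Fin.val_succ, h]
  · rw [if_neg (by simp [Fin.val_succ]), if_neg h]
    show g _ = g (Fin.succ _)
    congr 1
    ext
    simp [Fin.val_succ]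
    omega

lemma lcost_ofFn : ∀ (m : ℕ) (f g : Fin m → ℝ) (p : ℝ),
    lcost p (List.ofFn f) (List.ofFn g) = ∑ i, (|g i| + |f i + pprev p g i - g i|) := by
  intro m
  induction m with
  | zero => intro f g p; simp [lcost]
  | succ m ih =>
    intro f g p
    rw [List.ofFn_succ, List.ofFn_succ]
    show |g 0| + |f 0 + p - g 0| + lcost (g 0) _ _ = _
    rw [ih (fun i => f i.succ) (fun i => g i.succ) (g 0), Fin.sum_univ_succ]
    rw [pprev_succ_zero]
    have : ∀ i : Fin m, pprev (g 0) (fun k => g k.succ) i = pprev p g i.succ :=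
      fun i => (pprev_succ p g i).symm
    rw [Finset.sum_congr rfl (fun i _ => by rw [this i])]
    try ring

section FinStable

/-- stable recursion hypotheses, abstract form. -/
def PStable {m : ℕ} (E S : Fin m → ℝ) : Prop :=
  (∀ i : Fin m, ∀ h : (i : ℕ) + 1 < m,
    S i = stableStamp (E i) (E ⟨(i : ℕ) + 1, h⟩ - S ⟨(i : ℕ) + 1, h⟩)) ∧
  (∀ i : Fin m, (i : ℕ) + 1 = m → S i = 0)

lemma PStable.tail {m : ℕ} {E S : Fin (m+1) → ℝ} (h : PStable E S) :
    PStable (fun k : Fin m => E k.succ) (fun k : Fin m => S k.succ) := by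
  obtain ⟨h1, h2⟩ := h
  constructor
  · intro i hi
    have := h1 i.succ (by simp [Fin.val_succ]; omega)
    convert this using 3 <;> simp [Fin.val_succ, Fin.ext_iff]
  · intro i hi
    exact h2 i.succ (by simp [Fin.val_succ]; omega)

lemma stableStamp_zero (e : ℝ) : stableStamp e 0 = 0 := by
  unfold stableStamp; rw [if_pos (by simp)]

lemma rlist_ofFn : ∀ (m : ℕ) (E S : Fin m → ℝ), PStable E S → ∀ hm : 0 < m,
    rlist (List.ofFn E) = E ⟨0, hm⟩ - S ⟨0, hm⟩ := by
  intro m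
  induction m with
  | zero => intro _ _ _ hm; omega
  | succ m ih =>
    intro E S hPS hm
    rw [List.ofFn_succ]
    show resid (E 0) (rlist (List.ofFn fun i => E i.succ)) = _
    rcases Nat.eq_zero_or_pos m with rfl | hmpos
    · have : S 0 = 0 := hPS.2 0 rfl
      show resid (E 0) (rlist []) = E 0 - S 0
      rw [show rlist [] = 0 from rfl, resid_zero, this, sub_zero]
    · rw [ih _ _ hPS.tail hmpos]
      have h0 : S 0 = stableStamp (E 0) (E ⟨1, by omega⟩ - S ⟨1, by omega⟩) :=
        hPS.1 0 (by simp only [Fin.val_zero]; omega)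
      show E 0 - stableStamp (E 0) _ = E 0 - S 0
      rw [h0]
      congr 2 <;>
      · show E _ - S _ = E _ - S _
        congr 2 <;> ext <;> simp [Fin.val_succ]

lemma sB_ofFn : ∀ (m : ℕ) (E S : Fin m → ℝ), PStable E S →
    sB (List.ofFn E) = List.ofFn S := by
  intro m
  induction m with
  | zero => intro E S _; rfl
  | succ m ih =>
    intro E S hPS
    rw [List.ofFn_succ, List.ofFn_succ]
    show stableStamp (E 0) (rlist (List.ofFn fun i => E i.succ)) :: sB _ = _
    rw [ih _ _ hPS.tail]
    congr 1
    rcases Nat.eq_zero_or_pos m with rfl | hmpos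
    · show stableStamp (E 0) (rlist []) = S 0
      rw [show rlist [] = 0 from rfl, stableStamp_zero, (hPS.2 0 rfl).symm]
    · rw [rlist_ofFn m _ _ hPS.tail hmpos]
      have h0 : S 0 = stableStamp (E 0) (E ⟨1, by omega⟩ - S ⟨1, by omega⟩) :=
        hPS.1 0 (by simp only [Fin.val_zero]; omega)
      rw [h0]
      congr 2 <;>
      · show E _ - S _ = E _ - S _
        congr 2 <;> ext <;> simp [Fin.val_succ]

end FinStable


section Moves

lemma Move.apply_add (m : Move n) (γ c : Fin n → ℝ) :
    m.apply (fun j => γ j + c j) = fun j => m.apply γ j + c j := by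
  cases m <;> funext j <;> simp only [Move.apply, stamp, delay] <;> split_ifs <;> ring

lemma applySeq_add : ∀ (ms : List (Move n)) (γ c : Fin n → ℝ),
    applySeq ms (fun j => γ j + c j) = fun j => applySeq ms γ j + c j := by
  intro ms
  induction ms with
  | nil => intro γ c; rfl
  | cons m ms ih =>
    intro γ c
    show applySeq ms (m.apply fun j => γ j + c j) = _
    rw [Move.apply_add, ih]
    rfl

/-- total stamp amount at each position -/
def Smap (ms : List (Move n)) (i : Fin n) : ℝ :=
  (ms.map fun m => match m with
    | .stampM x j => if j = i then x else 0
    | .delayM _ _ => 0).sum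

/-- total delay amount at each position -/
def Dmap (ms : List (Move n)) (i : Fin n) : ℝ :=
  (ms.map fun m => match m with
    | .delayM x j => if j = i then x else 0
    | .stampM _ _ => 0).sum

lemma profile_eq : ∀ (ms : List (Move n)) (j : Fin n),
    applySeq ms (fun _ => 0) j
      = Smap ms j + ∑ i ∈ Finset.univ.filter (· ≤ j), Dmap ms i := by
  intro ms
  induction ms with
  | nil => intro j; simp [applySeq, Smap, Dmap]
  | cons m ms ih =>
    intro j
    have hm : (m.apply fun _ => (0:ℝ)) = fun j => (fun _ => (0:ℝ)) j + m.apply (fun _ => 0) j := by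
      funext j; simp
    have step : ∀ jj, applySeq (m :: ms) (fun _ => 0) jj
        = applySeq ms (fun _ => 0) jj + m.apply (fun _ => 0) jj := by
      intro jj
      show applySeq ms (m.apply fun _ => 0) jj = _
      rw [hm, applySeq_add]
      simp
    rw [step j, ih j]
    cases m with
    | stampM x k =>
      have hS : Smap (Move.stampM x k :: ms) j = (if k = j then x else 0) + Smap ms j := rfl
      have hD : ∀ i, Dmap (Move.stampM x k :: ms) i = Dmap ms i := fun i => by
        simp [Dmap]
      have happ : Move.apply (Move.stampM x k) (fun _ => 0) j = if j = k then x else 0 := by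
        simp [Move.apply, stamp]
      rw [hS, happ, Finset.sum_congr rfl (fun i _ => hD i)]
      have : (if k = j then x else 0) = (if j = k then x else 0) := by
        simp [eq_comm]
      rw [this]; ring
    | delayM x k =>
      have hS : Smap (Move.delayM x k :: ms) j = Smap ms j := by
        simp [Smap]
      have hD : ∀ i, Dmap (Move.delayM x k :: ms) i = (if k = i then x else 0) + Dmap ms i :=
        fun i => rfl
      have happ : Move.apply (Move.delayM x k) (fun _ => 0) j = if k ≤ j then x else 0 := by
        simp [Move.apply, delay]
      rw [hS, happ, Finset.sum_congr rfl (fun i _ => hD i), Finset.sum_add_distrib]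
      have : ∑ i ∈ Finset.univ.filter (· ≤ j), (if k = i then x else 0)
          = if k ≤ j then x else 0 := by
        rw [Finset.sum_ite_eq]
        simp
      rw [this]; ring

lemma seqCost_ge (ms : List (Move n)) :
    ∑ i, (|Smap ms i| + |Dmap ms i|) ≤ seqCost ms := by
  induction ms with
  | nil => simp [seqCost, Smap, Dmap]
  | cons m ms ih =>
    have hcost : seqCost (m :: ms) = m.cost + seqCost ms := rfl
    rw [hcost]
    cases m with
    | stampM x k =>
      have hS : ∀ i, Smap (Move.stampM x k :: ms) i = (if k = i then x else 0) + Smap ms i :=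
        fun i => rfl
      have hD : ∀ i, Dmap (Move.stampM x k :: ms) i = Dmap ms i := fun i => by
        simp [Dmap]
      have hb : ∀ i, |Smap (Move.stampM x k :: ms) i| + |Dmap (Move.stampM x k :: ms) i|
          ≤ |if k = i then x else 0| + (|Smap ms i| + |Dmap ms i|) := by
        intro i; rw [hS, hD]
        have := abs_add_le (if k = i then x else 0) (Smap ms i)
        linarith
      calc ∑ i, (|Smap (Move.stampM x k :: ms) i| + |Dmap (Move.stampM x k :: ms) i|)
          ≤ ∑ i, (|if k = i then x else 0| + (|Smap ms i| + |Dmap ms i|)) :=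
            Finset.sum_le_sum (fun i _ => hb i)
        _ = (∑ i, |if k = i then x else 0|) + ∑ i, (|Smap ms i| + |Dmap ms i|) :=
            Finset.sum_add_distrib
        _ ≤ Move.cost (Move.stampM x k) + seqCost ms := by
            have : ∑ i, |if k = i then x else 0| = |x| := by
              have : ∀ i, |if k = i then x else 0| = if k = i then |x| else 0 := by
                intro i; split_ifs <;> simp
              rw [Finset.sum_congr rfl (fun i _ => this i), Finset.sum_ite_eq]
              simp
            rw [this]
            exact add_le_add_right ih _
    | delayM x k =>
      have hD : ∀ i, Dmap (Move.delayM x k :: ms) i = (if k = i then x else 0) + Dmap ms i :=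
        fun i => rfl
      have hS : ∀ i, Smap (Move.delayM x k :: ms) i = Smap ms i := fun i => by
        simp [Smap]
      have hb : ∀ i, |Smap (Move.delayM x k :: ms) i| + |Dmap (Move.delayM x k :: ms) i|
          ≤ |if k = i then x else 0| + (|Smap ms i| + |Dmap ms i|) := by
        intro i; rw [hS, hD]
        have := abs_add_le (if k = i then x else 0) (Dmap ms i)
        linarith
      calc ∑ i, (|Smap (Move.delayM x k :: ms) i| + |Dmap (Move.delayM x k :: ms) i|)
          ≤ ∑ i, (|if k = i then x else 0| + (|Smap ms i| + |Dmap ms i|)) :=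
            Finset.sum_le_sum (fun i _ => hb i)
        _ = (∑ i, |if k = i then x else 0|) + ∑ i, (|Smap ms i| + |Dmap ms i|) :=
            Finset.sum_add_distrib
        _ ≤ Move.cost (Move.delayM x k) + seqCost ms := by
            have : ∑ i, |if k = i then x else 0| = |x| := by
              have : ∀ i, |if k = i then x else 0| = if k = i then |x| else 0 := by
                intro i; split_ifs <;> simp
              rw [Finset.sum_congr rfl (fun i _ => this i), Finset.sum_ite_eq]
              simp
            rw [this]
            exact add_le_add_right ih _

end Moves


section Flows

lemma Dsum_step (f : Fin n → ℝ) (i : Fin n) :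
    ∑ k ∈ Finset.univ.filter (· ≤ i), f k
      = f i + (if (i : ℕ) = 0 then 0
          else ∑ k ∈ Finset.univ.filter
            (· ≤ (⟨(i : ℕ) - 1, lt_of_le_of_lt (Nat.sub_le _ _) i.isLt⟩ : Fin n)), f k) := by
  split_ifs with h
  · have : Finset.univ.filter (· ≤ i) = {i} := by
      ext k
      simp only [Finset.mem_filter, Finset.mem_univ, true_and, Finset.mem_singleton,
        Fin.le_def, Fin.ext_iff]
      omega
    rw [this, Finset.sum_singleton, add_zero]
  · have hset : Finset.univ.filter (· ≤ i)
        = insert i (Finset.univ.filter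
            (· ≤ (⟨(i : ℕ) - 1, lt_of_le_of_lt (Nat.sub_le _ _) i.isLt⟩ : Fin n))) := by
      ext k
      simp only [Finset.mem_filter, Finset.mem_univ, true_and, Finset.mem_insert,
        Fin.le_def, Fin.ext_iff]
      omega
    rw [hset, Finset.sum_insert (by
      simp only [Finset.mem_filter, Finset.mem_univ, true_and, Fin.le_def]
      omega)]

lemma flow_diff (ms : List (Move n)) (γ : Fin n → ℝ) (i : Fin n) :
    flow (applySeq ms γ) i - flow γ i = Smap ms i + Dmap ms i - sprev (Smap ms) i := by
  have hσ : ∀ j, applySeq ms γ j = applySeq ms (fun _ => 0) j + γ j := by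
    intro j
    have h0 : (fun j => (fun _ => (0:ℝ)) j + γ j) = γ := by funext; simp
    calc applySeq ms γ j = applySeq ms (fun j => (fun _ => (0:ℝ)) j + γ j) j := by rw [h0]
      _ = applySeq ms (fun _ => 0) j + γ j := by rw [applySeq_add]
  have hP := profile_eq ms
  unfold flow prev sprev
  rw [hσ i]
  by_cases h : (i : ℕ) = 0
  · rw [if_pos h, if_pos h, if_pos h, hP i, Dsum_step (Dmap ms) i, if_pos h]
    ring
  · rw [if_neg h, if_neg h, if_neg h, hσ _, hP _, hP _, Dsum_step (Dmap ms) i, if_neg h]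
    ring

end Flows

section PairList

variable (s d : Fin n → ℝ)

def pairList (l : List (Fin n)) : List (Move n) :=
  l.flatMap (fun i => [Move.delayM (d i) i, Move.stampM (s i) i])

lemma applySeq_pairList : ∀ (l : List (Fin n)) (γ : Fin n → ℝ),
    applySeq (pairList s d l) γ = l.foldl (fun τ i => mixed (s i) (d i) i τ) γ := by
  intro l
  induction l with
  | nil => intro γ; rfl
  | cons i l ih =>
    intro γ
    show applySeq (pairList s d l) ((Move.stampM (s i) i).apply ((Move.delayM (d i) i).apply γ))
      = _
    rw [ih]
    rfl

lemma seqCost_pairList : ∀ l : List (Fin n),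
    seqCost (pairList s d l) = (l.map (fun i => |d i| + |s i|)).sum := by
  intro l
  induction l with
  | nil => rfl
  | cons i l ih =>
    show |d i| + (|s i| + seqCost (pairList s d l)) = _
    rw [ih, List.map_cons, List.sum_cons]
    ring

lemma Smap_pairList : ∀ (l : List (Fin n)) (i : Fin n),
    Smap (pairList s d l) i = (l.map (fun k => if k = i then s k else 0)).sum := by
  intro l
  induction l with
  | nil => intro i; rfl
  | cons k l ih =>
    intro i
    show (0:ℝ) + ((if k = i then s k else 0) + Smap (pairList s d l) i) = _
    rw [ih, List.map_cons, List.sum_cons]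
    ring

lemma Dmap_pairList : ∀ (l : List (Fin n)) (i : Fin n),
    Dmap (pairList s d l) i = (l.map (fun k => if k = i then d k else 0)).sum := by
  intro l
  induction l with
  | nil => intro i; rfl
  | cons k l ih =>
    intro i
    show (if k = i then d k else 0) + ((0:ℝ) + Dmap (pairList s d l) i) = _
    rw [ih, List.map_cons, List.sum_cons]
    ring

lemma sum_map_reverse_finRange (g : Fin n → ℝ) :
    ((List.finRange n).reverse.map g).sum = ∑ i, g i := by
  rw [List.map_reverse, List.sum_reverse, ← List.ofFn_eq_map, List.sum_ofFn]

lemma Smap_ms0 (i : Fin n) : Smap (pairList s d (List.finRange n).reverse) i = s i := by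
  rw [Smap_pairList, sum_map_reverse_finRange]
  rw [Finset.sum_ite_eq' Finset.univ i s]
  simp

lemma Dmap_ms0 (i : Fin n) : Dmap (pairList s d (List.finRange n).reverse) i = d i := by
  rw [Dmap_pairList, sum_map_reverse_finRange]
  rw [Finset.sum_ite_eq' Finset.univ i d]
  simp

lemma seqCost_ms0 : seqCost (pairList s d (List.finRange n).reverse) = chronCost s d := by
  rw [seqCost_pairList, sum_map_reverse_finRange]
  unfold chronCost
  exact Finset.sum_congr rfl (fun i _ => add_comm _ _)

lemma applySeq_ms0 (γ : Fin n → ℝ) :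
    applySeq (pairList s d (List.finRange n).reverse) γ = revChronApply s d γ := by
  rw [applySeq_pairList]
  rfl

end PairList

end Aux

/-- the stable, co-operative, reverse chronological sequence of mixed moves
aligning `γ` to `σ` has minimal cost among all sequences of stamp and delay moves aligning
`γ` to `σ`: its cost equals `d_N(γ, σ)`. -/
theorem statement10 (n : ℕ) (γ σ s d : Fin n → ℝ)
    (halign : revChronApply s d γ = σ) (hcoop : Cooperative s d)
    (hlast : LastStampZero s) (hstable : Stable γ σ s) :
    chronCost s d = dN γ σ := by
  classical
  have hPS : PStable (fun i => flow σ i - flow γ i) s := ⟨hstable, hlast⟩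
  set E : Fin n → ℝ := fun i => flow σ i - flow γ i with hEdef
  set ms0 := pairList s d (List.finRange n).reverse with hms0
  have happly : applySeq ms0 γ = σ := by rw [applySeq_ms0]; exact halign
  have hflow0 : ∀ i, E i = s i + d i - sprev s i := by
    intro i
    have h := flow_diff ms0 γ i
    rw [happly, Smap_ms0, Dmap_ms0] at h
    have hsp : sprev (Smap ms0) i = sprev s i := by
      unfold sprev
      split_ifs
      · rfl
      · rw [Smap_ms0]
    rw [hsp] at h
    exact h
  have hd : ∀ i, d i = E i + sprev s i - s i := fun i => by have := hflow0 i; linarith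
  have hcc : chronCost s d = Rcost (List.ofFn E) := by
    have h1 : chronCost s d = lcost 0 (List.ofFn E) (List.ofFn s) := by
      rw [lcost_ofFn]
      unfold chronCost
      refine Finset.sum_congr rfl (fun i _ => ?_)
      rw [pprev_zero, ← hd i]
    rw [h1, ← sB_ofFn n E s hPS, cost_stable_zero]
  have hlow : ∀ c, (∃ ms : List (Move n), applySeq ms γ = σ ∧ seqCost ms = c) →
      chronCost s d ≤ c := by
    rintro c ⟨ms, hms, rfl⟩
    have h1 : ∀ i, E i = Smap ms i + Dmap ms i - sprev (Smap ms) i := by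
      intro i
      have h := flow_diff ms γ i
      rw [hms] at h
      exact h
    calc chronCost s d = Rcost (List.ofFn E) := hcc
      _ = lcost 0 (List.ofFn E) (sB (List.ofFn E)) := (cost_stable_zero _).symm
      _ ≤ lcost 0 (List.ofFn E) (List.ofFn (Smap ms)) := list_main _ _
      _ = ∑ i, (|Smap ms i| + |E i + pprev 0 (Smap ms) i - Smap ms i|) := lcost_ofFn n E (Smap ms) 0
      _ = ∑ i, (|Smap ms i| + |Dmap ms i|) := by
          refine Finset.sum_congr rfl (fun i _ => ?_)
          rw [pprev_zero]
          have := h1 i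
          have heq : E i + sprev (Smap ms) i - Smap ms i = Dmap ms i := by linarith
          rw [heq]
      _ ≤ seqCost ms := seqCost_ge ms
  have hmem : chronCost s d ∈ {c : ℝ | ∃ ms : List (Move n), applySeq ms γ = σ ∧ seqCost ms = c} :=
    ⟨ms0, happly, seqCost_ms0 s d⟩
  unfold dN
  refine le_antisymm (le_csInf ⟨_, hmem⟩ (fun c hc => hlow c hc)) ?_
  exact csInf_le ⟨chronCost s d, fun c hc => hlow c hc⟩ hmem

end TimedAlign
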